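/- A topological space X is Q*-normal if and only if for every Q*-closed set A and every Q*-open set B with A ⊆ B, there exists an open set U such that A ⊆ U ⊆ cl(U) ⊆ B. -/
import Mathlib


open Set Topology

def QStarClosed {X : Type*} [TopologicalSpace X] (A : Set X) : Prop :=
  IsClosed A ∧ interior A = ∅

def QStarOpen {X : Type*} [TopologicalSpace X] (A : Set X) : Prop :=
  QStarClosed Aᶜ

def GClosed {X : Type*} [TopologicalSpace X] (A : Set X) : Prop :=
  ∀ U : Set X, IsOpen U → A ⊆ U → closure A ⊆ U

def QStarGClosed {X : Type*} [TopologicalSpace X] (A : Set X) : Prop :=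
  ∀ U : Set X, QStarOpen U → A ⊆ U → closure A ⊆ U

def QStarGOpen {X : Type*} [TopologicalSpace X] (A : Set X) : Prop :=
  QStarGClosed Aᶜ

def QStarNormal (X : Type*) [TopologicalSpace X] : Prop :=
  ∀ A B : Set X, QStarClosed A → QStarClosed B → Disjoint A B →
    ∃ U V : Set X, IsOpen U ∧ IsOpen V ∧ A ⊆ U ∧ B ⊆ V ∧ Disjoint U V

def NormalSp (X : Type*) [TopologicalSpace X] : Prop :=
  ∀ A B : Set X, IsClosed A → IsClosed B → Disjoint A B →
    ∃ U V : Set X, IsOpen U ∧ IsOpen V ∧ A ⊆ U ∧ B ⊆ V ∧ Disjoint U V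

def GNormal (X : Type*) [TopologicalSpace X] : Prop :=
  ∀ A B : Set X, GClosed A → GClosed B → Disjoint A B →
    ∃ U V : Set X, IsOpen U ∧ IsOpen V ∧ A ⊆ U ∧ B ⊆ V ∧ Disjoint U V

theorem stmt11 {X : Type*} [TopologicalSpace X] :
    QStarNormal X ↔
      ∀ A B : Set X, QStarClosed A → QStarOpen B → A ⊆ B →
        ∃ U : Set X, IsOpen U ∧ A ⊆ U ∧ U ⊆ closure U ∧ closure U ⊆ B := by
  constructor
  · intro h A B hA hB hAB
    obtain ⟨U, V, hU, hV, hAU, hBV, hUV⟩ := h A Bᶜ hA hB (disjoint_compl_right_iff_subset.mpr hAB)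
    refine ⟨U, hU, hAU, subset_closure, ?_⟩
    have : closure U ⊆ Vᶜ := closure_minimal (hUV.subset_compl_right) hV.isClosed_compl
    exact this.trans (compl_subset_comm.mp hBV)
  · intro h A B hA hB hd
    obtain ⟨U, hU, hAU, _, hcl⟩ := h A Bᶜ hA (by simpa [QStarOpen] using hB)
      (Set.subset_compl_iff_disjoint_right.mpr hd)
    exact ⟨U, (closure U)ᶜ, hU, isClosed_closure.isOpen_compl, hAU,
      Set.subset_compl_comm.mp hcl, disjoint_compl_right.mono_left subset_closure⟩
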